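/- arXiv:2302.05828 — 7 statements merged into one kernel-verified Lean document; each statement's English description precedes it below -/
import Mathlib

section
/- The function f(ρ) = (1/π)(sin(arccos ρ) + (π − arccos ρ)·ρ) satisfies 0 ≤ f'(ρ) ≤ 1 for all ρ ∈ (−1, 1); in particular f is a contraction mapping (1-Lipschitz) on [−1, 1]. -/
/-- The ReLU arc-cosine correlation mapping. -/
noncomputable def arcCosCorr (ρ : ℝ) : ℝ :=
  (1 / Real.pi) * (Real.sin (Real.arccos ρ) + (Real.pi - Real.arccos ρ) * ρ)

lemma arcCosCorr_hasDerivAt {ρ : ℝ} (h : ρ ∈ Set.Ioo (-1 : ℝ) 1) :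
    HasDerivAt arcCosCorr ((Real.pi - Real.arccos ρ) / Real.pi) ρ := by
  obtain ⟨h1, h2⟩ := h
  have hρ1 : ρ ≠ -1 := ne_of_gt h1
  have hρ2 : ρ ≠ 1 := ne_of_lt h2
  have hs : (0:ℝ) < 1 - ρ ^ 2 := by nlinarith
  have hsq : Real.sqrt (1 - ρ ^ 2) ≠ 0 := by positivity
  have ha := Real.hasDerivAt_arccos hρ1 hρ2
  have hsin : HasDerivAt (fun x => Real.sin (Real.arccos x))
      (Real.cos (Real.arccos ρ) * (-(1 / Real.sqrt (1 - ρ ^ 2)))) ρ :=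
    (Real.hasDerivAt_sin _).comp ρ ha
  have hmul : HasDerivAt (fun x => (Real.pi - Real.arccos x) * x)
      ((0 - (-(1 / Real.sqrt (1 - ρ ^ 2)))) * ρ + (Real.pi - Real.arccos ρ) * 1) ρ :=
    ((hasDerivAt_const ρ Real.pi).sub ha).mul (hasDerivAt_id ρ)
  have h := ((hsin.add hmul).const_mul (1 / Real.pi))
  have hcos : Real.cos (Real.arccos ρ) = ρ := Real.cos_arccos h1.le h2.le
  refine HasDerivAt.congr_deriv (h : HasDerivAt arcCosCorr _ ρ) (Eq.symm ?_)
  rw [hcos]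
  have hπ : Real.pi ≠ 0 := Real.pi_ne_zero
  field_simp
  ring_nf

lemma arcCosCorr_deriv {ρ : ℝ} (h : ρ ∈ Set.Ioo (-1 : ℝ) 1) :
    deriv arcCosCorr ρ = (Real.pi - Real.arccos ρ) / Real.pi :=
  (arcCosCorr_hasDerivAt h).deriv

lemma arcCosCorr_deriv_bounds {ρ : ℝ} (h : ρ ∈ Set.Ioo (-1 : ℝ) 1) :
    0 ≤ deriv arcCosCorr ρ ∧ deriv arcCosCorr ρ ≤ 1 := by
  rw [arcCosCorr_deriv h]
  have hπ : (0:ℝ) < Real.pi := Real.pi_pos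
  have h1 : Real.arccos ρ ≤ Real.pi := Real.arccos_le_pi ρ
  have h2 : 0 ≤ Real.arccos ρ := Real.arccos_nonneg ρ
  constructor
  · exact div_nonneg (by linarith) hπ.le
  · rw [div_le_one hπ]; linarith

lemma arcCosCorr_continuous : Continuous arcCosCorr := by
  unfold arcCosCorr
  exact continuous_const.mul ((Real.continuous_sin.comp Real.continuous_arccos).add
    ((continuous_const.sub Real.continuous_arccos).mul continuous_id))

/-- `0 ≤ f'(ρ) ≤ 1` on `(-1,1)`, and `f` is 1-Lipschitz (a contraction
mapping) on `[-1,1]`. -/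
theorem arcCosCorr_deriv_mem_and_lipschitz :
    (∀ ρ ∈ Set.Ioo (-1 : ℝ) 1, 0 ≤ deriv arcCosCorr ρ ∧ deriv arcCosCorr ρ ≤ 1) ∧
    LipschitzOnWith 1 arcCosCorr (Set.Icc (-1 : ℝ) 1) := by
  refine ⟨fun ρ hρ => arcCosCorr_deriv_bounds hρ, ?_⟩
  rw [lipschitzOnWith_iff_dist_le_mul]
  have key : ∀ x ∈ Set.Icc (-1:ℝ) 1, ∀ y ∈ Set.Icc (-1:ℝ) 1, x < y →
      dist (arcCosCorr x) (arcCosCorr y) ≤ dist x y := by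
    intro x hx y hy hxy
    have hsub : Set.Ioo x y ⊆ Set.Ioo (-1:ℝ) 1 :=
      Set.Ioo_subset_Ioo (by linarith [hx.1]) (by linarith [hy.2])
    obtain ⟨c, hc, hderiv⟩ := exists_hasDerivAt_eq_slope arcCosCorr (deriv arcCosCorr) hxy
      (arcCosCorr_continuous.continuousOn)
      (fun z hz => (arcCosCorr_hasDerivAt (hsub hz)).congr_deriv
        (arcCosCorr_deriv (hsub hz)).symm)
    have hb := arcCosCorr_deriv_bounds (hsub hc)
    rw [Real.dist_eq, Real.dist_eq]
    have hne : y - x ≠ 0 := sub_ne_zero.2 hxy.ne'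
    have : arcCosCorr y - arcCosCorr x = deriv arcCosCorr c * (y - x) := by
      rw [hderiv]; field_simp
    rw [abs_sub_comm, this, abs_mul]
    have : |deriv arcCosCorr c| ≤ 1 := abs_le.2 ⟨by linarith [hb.1], hb.2⟩
    calc |deriv arcCosCorr c| * |y - x| ≤ 1 * |y - x| :=
          mul_le_mul_of_nonneg_right this (abs_nonneg _)
      _ = |y - x| := one_mul _
      _ = |x - y| := abs_sub_comm _ _
  intro x hx y hy
  push_cast
  rcases lt_trichotomy x y with h | h | h
  · simpa using key x hx y hy h
  · simp [h]
  · rw [dist_comm, dist_comm x y]; simpa using key y hy x hx h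
end

section
/- For the function f(ρ) = (1/π)(sin(arccos ρ) + (π − arccos ρ)·ρ) on [−1, 1], one has f(ρ) ≥ ρ for all ρ ∈ [−1, 1], with equality if and only if ρ = 1. -/
lemma g_strictMono : StrictMonoOn (fun θ : ℝ => Real.sin θ - θ * Real.cos θ)
    (Set.Icc 0 Real.pi) := by
  apply strictMonoOn_of_deriv_pos (convex_Icc _ _)
  · fun_prop
  · intro x hx
    rw [interior_Icc] at hx
    have h : HasDerivAt (fun θ : ℝ => Real.sin θ - θ * Real.cos θ)
        (Real.cos x - (1 * Real.cos x + x * (-Real.sin x))) x := by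
      exact (Real.hasDerivAt_sin x).sub ((hasDerivAt_id x).mul (Real.hasDerivAt_cos x))
    rw [h.deriv]
    have hs : 0 < Real.sin x := Real.sin_pos_of_pos_of_lt_pi hx.1 hx.2
    nlinarith [hx.1]

lemma g_pos {θ : ℝ} (h0 : 0 < θ) (hπ : θ ≤ Real.pi) :
    0 < Real.sin θ - θ * Real.cos θ := by
  have := g_strictMono (Set.left_mem_Icc.2 Real.pi_pos.le) ⟨h0.le, hπ⟩ h0
  simpa using this

/-- `f(ρ) ≥ ρ` on `[-1,1]`, with equality iff `ρ = 1`. -/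
theorem arcCosCorr_ge_self :
    ∀ ρ ∈ Set.Icc (-1 : ℝ) 1, ρ ≤ arcCosCorr ρ ∧ (arcCosCorr ρ = ρ ↔ ρ = 1) := by
  intro ρ hρ
  set θ := Real.arccos ρ with hθ
  have hcos : Real.cos θ = ρ := Real.cos_arccos hρ.1 hρ.2
  have hθ0 : 0 ≤ θ := Real.arccos_nonneg ρ
  have hθπ : θ ≤ Real.pi := Real.arccos_le_pi ρ
  have hπ : 0 < Real.pi := Real.pi_pos
  have key : arcCosCorr ρ - ρ = (1 / Real.pi) * (Real.sin θ - θ * ρ) := by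
    rw [arcCosCorr, ← hθ]
    field_simp
    ring
  rcases eq_or_lt_of_le hθ0 with h0 | h0
  · have hρ1 : ρ = 1 := by rw [← hcos, ← h0, Real.cos_zero]
    have : arcCosCorr ρ = ρ := by
      have hz : Real.sin θ - θ * ρ = 0 := by rw [← h0]; simp
      rw [hz, mul_zero] at key
      linarith
    exact ⟨this.ge, by tauto⟩
  · have hg := g_pos h0 hθπ
    rw [hcos] at hg
    have hlt : ρ < arcCosCorr ρ := by
      have : 0 < (1 / Real.pi) * (Real.sin θ - θ * ρ) := by positivity
      linarith [key]
    refine ⟨hlt.le, ?_, ?_⟩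
    · intro h; linarith
    · intro h
      exfalso
      have : θ = 0 := by rw [hθ, h, Real.arccos_one]
      linarith
end

section
/- The function f(ρ) = (1/π)(sin(arccos ρ) + (π − arccos ρ)·ρ) has a unique fixed point on [−1, 1], namely ρ = 1. -/
lemma sin_gt_mul_cos {θ : ℝ} (h0 : 0 < θ) (hπ : θ ≤ Real.pi) :
    θ * Real.cos θ < Real.sin θ := by
  rcases lt_trichotomy θ (Real.pi / 2) with h | h | h
  · have hc : 0 < Real.cos θ := Real.cos_pos_of_mem_Ioo ⟨by linarith [Real.pi_pos], h⟩
    have := Real.lt_tan h0 h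
    rw [Real.tan_eq_sin_div_cos, lt_div_iff₀ hc] at this
    linarith
  · subst h
    simp [Real.sin_pi_div_two, Real.cos_pi_div_two]

  · rcases eq_or_lt_of_le hπ with h1 | h1
    · subst h1
      simp [Real.sin_pi, Real.cos_pi]
      linarith [Real.pi_pos]
    · have hs : 0 < Real.sin θ := Real.sin_pos_of_pos_of_lt_pi h0 h1
      have hc : Real.cos θ ≤ 0 := Real.cos_nonpos_of_pi_div_two_le_of_le h.le (by linarith)
      nlinarith

/-- `f` has a unique fixed point on `[-1,1]`, namely `ρ = 1`:
`ρ = 1` is a fixed point, and any fixed point in `[-1,1]` equals `1`. -/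
theorem arcCosCorr_unique_fixedPoint :
    arcCosCorr 1 = 1 ∧ ∀ ρ ∈ Set.Icc (-1 : ℝ) 1, arcCosCorr ρ = ρ → ρ = 1 := by
  have hπ := Real.pi_pos
  constructor
  · simp [arcCosCorr, Real.arccos_one]
  · rintro ρ ⟨h1, h2⟩ hfix
    set θ := Real.arccos ρ with hθ
    have hθ0 : 0 ≤ θ := Real.arccos_nonneg ρ
    have hθπ : θ ≤ Real.pi := Real.arccos_le_pi ρ
    have hcos : Real.cos θ = ρ := Real.cos_arccos h1 h2
    have key : Real.sin θ = θ * ρ := by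
      have : (1 / Real.pi) * (Real.sin θ + (Real.pi - θ) * ρ) = ρ := hfix
      field_simp at this
      linarith
    rcases eq_or_lt_of_le hθ0 with h0 | h0
    · have : ρ = 1 := by rw [← hcos, ← h0, Real.cos_zero]
      exact this
    · exfalso
      have := sin_gt_mul_cos h0 hθπ
      rw [hcos] at this
      linarith
end

section
/- Let x₁, …, x_m be pairwise distinct points on the upper hemisphere S = {x ∈ ℝ^d : ‖x‖₂ = 1, x₁ > 0} with d ≥ 2, and let φ(t) = max(t, 0) be the ReLU function. If c₁, …, c_m ∈ ℝ satisfy Σᵢ cᵢ φ(w · xᵢ) = 0 for all w ∈ ℝ^d, then c₁ = ⋯ = c_m = 0. Consequently, the functions w ↦ φ(w · xᵢ) are linearly independent. -/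
open RealInnerProductSpace Finset

set_option maxHeartbeats 1000000 in
/-- linear independence of the ReLU feature maps `w ↦ φ(w ⋅ xᵢ)` for
pairwise distinct points on the open upper hemisphere of the unit sphere in `ℝ^d`,
`d ≥ 2` (universality of the arc-cosine kernel). -/
theorem relu_features_linearIndependent {d m : ℕ} (hd : 2 ≤ d)
    (x : Fin m → EuclideanSpace ℝ (Fin d))
    (hdist : Function.Injective x)
    (hnorm : ∀ i, ‖x i‖ = 1)
    (hpos : ∀ i, 0 < x i ⟨0, by omega⟩)
    (c : Fin m → ℝ)
    (h : ∀ w : EuclideanSpace ℝ (Fin d),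
      ∑ i, c i * max (inner ℝ w (x i) : ℝ) 0 = 0) :
    ∀ i, c i = 0 := by
  classical
  intro i
  have hxne : x i ≠ 0 := by
    intro h0
    have := hnorm i
    rw [h0] at this
    simp at this
  -- strict Cauchy–Schwarz for distinct points
  have hinner_lt : ∀ j, j ≠ i → |(⟪x i, x j⟫ : ℝ)| < 1 := by
    intro j hj
    have h1 : |(⟪x i, x j⟫ : ℝ)| ≤ 1 := by
      simpa [hnorm] using abs_real_inner_le_norm (x i) (x j)
    rcases lt_or_eq_of_le h1 with hlt | heq
    · exact hlt
    · exfalso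
      rcases abs_eq (by norm_num : (0:ℝ) ≤ 1) |>.mp heq with h2 | h2
      · have : x i = x j := (inner_eq_one_iff_of_norm_eq_one (hnorm i) (hnorm j)).mp h2
        exact hj (hdist this.symm)
      · have h3 : (⟪x i, -(x j)⟫ : ℝ) = 1 := by
          rw [inner_neg_right, h2]; ring
        have hnj : ‖-(x j)‖ = 1 := by rw [norm_neg]; exact hnorm j
        have hxeq : x i = -(x j) := (inner_eq_one_iff_of_norm_eq_one (hnorm i) hnj).mp h3
        have hcoord : x i ⟨0, by omega⟩ = -(x j ⟨0, by omega⟩) := by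
          rw [hxeq]; rfl
        have h4 := hpos i
        have h5 := hpos j
        rw [hcoord] at h4
        linarith
  -- the orthogonal complement of x i is nontrivial
  set K : Submodule ℝ (EuclideanSpace ℝ (Fin d)) := (ℝ ∙ (x i))ᗮ with hK
  have hrank : Module.finrank ℝ K + 1 = d := by
    have h1 := Submodule.finrank_add_finrank_orthogonal (K := (ℝ ∙ (x i)))
    rw [finrank_span_singleton hxne] at h1
    have hE : Module.finrank ℝ (EuclideanSpace ℝ (Fin d)) = d := finrank_euclideanSpace_fin
    rw [hE, ← hK] at h1
    omega
  have hKnt : Nontrivial K := by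
    rw [← Module.finrank_pos_iff (R := ℝ)]
    omega
  -- subspaces of K to avoid
  set q : Fin m → Submodule ℝ K := fun j =>
    if j = i then ⊥ else
      LinearMap.ker (((innerSL ℝ (x j)).toLinearMap).comp K.subtype) with hq
  have hne : ∀ j, q j ≠ ⊤ := by
    intro j
    by_cases hji : j = i
    · simp only [hq, hji, if_pos rfl]
      exact bot_ne_top
    · simp only [hq, if_neg hji]
      intro htop
      -- the vector y = x j - ⟪x i, x j⟫ • x i lies in K but not in the kernel
      set y : EuclideanSpace ℝ (Fin d) := x j - (⟪x i, x j⟫ : ℝ) • x i with hy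
      have hyK : y ∈ K := by
        rw [hK, Submodule.mem_orthogonal_singleton_iff_inner_right]
        rw [hy, inner_sub_right, real_inner_smul_right, real_inner_self_eq_norm_sq,
          hnorm i]
        ring
      have hyval : (⟪x j, y⟫ : ℝ) = 1 - (⟪x i, x j⟫ : ℝ)^2 := by
        rw [hy, inner_sub_right, real_inner_smul_right, real_inner_self_eq_norm_sq,
          hnorm j, real_inner_comm (x j) (x i)]
        ring
      have hmem : (⟨y, hyK⟩ : K) ∈ LinearMap.ker
          (((innerSL ℝ (x j)).toLinearMap).comp K.subtype) := htop ▸ Submodule.mem_top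
      rw [LinearMap.mem_ker] at hmem
      have hz : (⟪x j, y⟫ : ℝ) = 0 := hmem
      rw [hyval] at hz
      have hlt := hinner_lt j hji
      nlinarith [sq_abs ((⟪x i, x j⟫ : ℝ)), abs_nonneg ((⟪x i, x j⟫ : ℝ))]
  -- pick w₀ in K avoiding all the subspaces
  have hcov : (⋃ j, (q j : Set K)) ≠ Set.univ := by
    intro hc
    obtain ⟨j, hj⟩ := Subspace.exists_eq_top_of_iUnion_eq_univ hc
    exact hne j hj
  obtain ⟨w₀, hw₀⟩ := Set.ne_univ_iff_exists_notMem _ |>.mp hcov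
  simp only [Set.mem_iUnion, not_exists, SetLike.mem_coe] at hw₀
  have hwi : (⟪x i, (w₀ : EuclideanSpace ℝ (Fin d))⟫ : ℝ) = 0 :=
    Submodule.mem_orthogonal_singleton_iff_inner_right.mp w₀.2
  have hwj : ∀ j, j ≠ i → (⟪x j, (w₀ : EuclideanSpace ℝ (Fin d))⟫ : ℝ) ≠ 0 := by
    intro j hj
    have := hw₀ j
    simp only [hq, if_neg hj, LinearMap.mem_ker] at this
    exact this
  set w : EuclideanSpace ℝ (Fin d) := (w₀ : EuclideanSpace ℝ (Fin d)) with hw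
  -- choose ε
  have hεex : ∃ ε : ℝ, 0 < ε ∧ ∀ j, j ≠ i → ε ≤ |(⟪x j, w⟫ : ℝ)| := by
    rcases Finset.eq_empty_or_nonempty (Finset.univ.erase i) with he | hne'
    · refine ⟨1, one_pos, fun j hj => absurd ?_ (by simp [he] :
        j ∉ Finset.univ.erase i)⟩
      exact Finset.mem_erase.mpr ⟨hj, Finset.mem_univ j⟩
    · refine ⟨(Finset.univ.erase i).inf' hne' (fun j => |(⟪x j, w⟫ : ℝ)|), ?_, ?_⟩
      · rw [Finset.lt_inf'_iff]
        intro j hj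
        exact abs_pos.mpr (hwj j (Finset.ne_of_mem_erase hj))
      · intro j hj
        exact Finset.inf'_le _ (Finset.mem_erase.mpr ⟨hj, Finset.mem_univ j⟩)
  obtain ⟨ε, hε, hεle⟩ := hεex
  -- the affine pieces
  set S : Finset (Fin m) :=
    (Finset.univ.erase i).filter (fun j => 0 < (inner ℝ w (x j) : ℝ)) with hS
  set A : ℝ := ∑ j ∈ S, c j * (inner ℝ w (x j) : ℝ) with hA
  set B : ℝ := ∑ j ∈ S, c j * (inner ℝ (x i) (x j) : ℝ) with hB
  have key : ∀ t : ℝ, |t| < ε → c i * max t 0 + (A + B * t) = 0 := by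
    intro t ht
    have h0 := h (w + t • x i)
    have hterm : ∀ j, (inner ℝ (w + t • x i) (x j) : ℝ)
        = (inner ℝ w (x j) : ℝ) + t * (inner ℝ (x i) (x j) : ℝ) := by
      intro j
      rw [inner_add_left, real_inner_smul_left]
    have hsum : (∑ j, c j * max (inner ℝ (w + t • x i) (x j) : ℝ) 0)
        = c i * max t 0 + (A + B * t) := by
      rw [← Finset.add_sum_erase Finset.univ _ (Finset.mem_univ i)]
      congr 1
      · -- the i-th term
        rw [hterm i, real_inner_comm (x i) w, hwi, real_inner_self_eq_norm_sq, hnorm i]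
        norm_num
      · -- the rest
        have hpiece : ∀ j ∈ Finset.univ.erase i,
            c j * max (inner ℝ (w + t • x i) (x j) : ℝ) 0 =
            if 0 < (inner ℝ w (x j) : ℝ) then
              c j * ((inner ℝ w (x j) : ℝ) + (inner ℝ (x i) (x j) : ℝ) * t) else 0 := by
          intro j hj
          have hji : j ≠ i := Finset.ne_of_mem_erase hj
          have hcs : |(⟪x i, x j⟫ : ℝ)| ≤ 1 := le_of_lt (hinner_lt j hji)
          have hpert : |t * (inner ℝ (x i) (x j) : ℝ)| < ε := by
            rw [abs_mul]
            calc |t| * |(⟪x i, x j⟫ : ℝ)| ≤ |t| * 1 :=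
                  mul_le_mul_of_nonneg_left hcs (abs_nonneg t)
              _ = |t| := by ring
              _ < ε := ht
          have hbound : ε ≤ |(⟪x j, w⟫ : ℝ)| := hεle j hji
          rw [real_inner_comm w (x j)] at hbound
          rw [hterm j]
          by_cases hsgn : 0 < (inner ℝ w (x j) : ℝ)
          · rw [if_pos hsgn]
            have hge : ε ≤ (inner ℝ w (x j) : ℝ) := by
              rw [abs_of_pos hsgn] at hbound; exact hbound
            have hvpos : 0 < (inner ℝ w (x j) : ℝ) + t * (inner ℝ (x i) (x j) : ℝ) := by
              have := neg_abs_le (t * (inner ℝ (x i) (x j) : ℝ))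
              linarith
            rw [max_eq_left (le_of_lt hvpos)]
            ring
          · rw [if_neg hsgn]
            have hne0 : (inner ℝ w (x j) : ℝ) ≠ 0 := by
              rw [real_inner_comm (x j) w]; exact hwj j hji
            have hneg : (inner ℝ w (x j) : ℝ) < 0 :=
              lt_of_le_of_ne (not_lt.mp hsgn) hne0
            have hle : (inner ℝ w (x j) : ℝ) ≤ -ε := by
              rw [abs_of_neg hneg] at hbound; linarith
            have hvneg : (inner ℝ w (x j) : ℝ) + t * (inner ℝ (x i) (x j) : ℝ) < 0 := by
              have := le_abs_self (t * (inner ℝ (x i) (x j) : ℝ))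
              linarith
            rw [max_eq_right (le_of_lt hvneg)]
            ring
        rw [Finset.sum_congr rfl hpiece, Finset.sum_ite, Finset.sum_const_zero, add_zero,
          hA, hB, hS, Finset.sum_mul, ← Finset.sum_add_distrib]
        apply Finset.sum_congr rfl
        intro j hj
        ring
    rw [hsum] at h0
    exact h0
  -- evaluate at three points
  have e1 := key (-(ε/2)) (by rw [abs_neg, abs_of_pos (by linarith)]; linarith)
  have e2 := key (-(ε/4)) (by rw [abs_neg, abs_of_pos (by linarith)]; linarith)
  have e3 := key (ε/2) (by rw [abs_of_pos (by linarith)]; linarith)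
  rw [max_eq_right (by linarith)] at e1 e2
  rw [max_eq_left (by linarith)] at e3
  have hB0 : B = 0 := by
    have hb : B * (ε/4) = 0 := by linarith
    rcases mul_eq_zero.mp hb with hb' | hb'
    · exact hb'
    · linarith
  have hA0 : A = 0 := by rw [hB0] at e1; linarith
  have hc : c i * (ε/2) = 0 := by rw [hA0, hB0] at e3; linarith
  rcases mul_eq_zero.mp hc with hc' | hc'
  · exact hc'
  · linarith
end

section
/- Let B be an N×N positive semi-definite matrix and let g(B) = E_{z∼N(0,B)}[φ(z)φ(z)ᵀ] with φ the ReLU. Then g(B)(x, x') ≥ (1/2) B(x, x') entrywise, and the diagonal satisfies g(B)(x, x) = (1/2) B(x, x) for every x. -/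
/-- The ReLU covariance mapping `g(B) = E_{z ∼ N(0,B)}[φ(z)φ(z)ᵀ]`, given by the
closed form `g(B)(x,x') = (1/2)√(B(x,x))√(B(x',x')) f(ρ_B(x,x'))` (entries where a
diagonal of `B` vanishes are 0). -/
noncomputable def reluCov {N : ℕ} (B : Matrix (Fin N) (Fin N) ℝ) :
    Matrix (Fin N) (Fin N) ℝ :=
  Matrix.of fun x x' =>
    (1 / 2) * Real.sqrt (B x x) * Real.sqrt (B x' x') *
      arcCosCorr (B x x' / (Real.sqrt (B x x) * Real.sqrt (B x' x')))

lemma sin_ge_mul_cos {θ : ℝ} (h0 : 0 ≤ θ) (hπ : θ ≤ Real.pi) :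
    θ * Real.cos θ ≤ Real.sin θ := by
  rcases le_or_gt (Real.cos θ) 0 with hc | hc
  · have hs : 0 ≤ Real.sin θ := Real.sin_nonneg_of_nonneg_of_le_pi h0 hπ
    nlinarith
  · have hθ2 : θ < Real.pi / 2 := by
      by_contra h
      exact absurd (Real.cos_nonpos_of_pi_div_two_le_of_le (not_lt.mp h)
        (by linarith [Real.pi_pos])) (not_le.mpr hc)
    rcases eq_or_lt_of_le h0 with h0' | h0'
    · simp [← h0']
    · have ht := Real.lt_tan h0' hθ2
      rw [Real.tan_eq_sin_div_cos] at ht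
      have := mul_lt_mul_of_pos_right ht hc
      rw [div_mul_cancel₀ _ hc.ne'] at this
      exact this.le

lemma le_arcCosCorr {ρ : ℝ} (h1 : -1 ≤ ρ) (h2 : ρ ≤ 1) : ρ ≤ arcCosCorr ρ := by
  have hθ0 := Real.arccos_nonneg ρ
  have hθπ := Real.arccos_le_pi ρ
  have hcos : Real.cos (Real.arccos ρ) = ρ := Real.cos_arccos h1 h2
  have key := sin_ge_mul_cos hθ0 hθπ
  rw [hcos] at key
  have hπ := Real.pi_pos
  rw [arcCosCorr, ← sub_nonneg]
  have h : (1 / Real.pi) * (Real.sin (Real.arccos ρ) + (Real.pi - Real.arccos ρ) * ρ) - ρ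
      = (1 / Real.pi) * (Real.sin (Real.arccos ρ) - Real.arccos ρ * ρ) := by
    field_simp; ring
  rw [h]
  apply mul_nonneg (by positivity) (by linarith)

lemma arcCosCorr_one : arcCosCorr 1 = 1 := by
  have hπ := Real.pi_pos
  simp [arcCosCorr, Real.arccos_one]

lemma psd_entry_sq_le {N : ℕ} (B : Matrix (Fin N) (Fin N) ℝ) (hB : B.PosSemidef)
    (x x' : Fin N) : (B x x') ^ 2 ≤ B x x * B x' x' := by
  have hsym : B x' x = B x x' := by
    have := hB.1.apply x x'
    simpa using this
  rcases eq_or_ne x x' with rfl | hne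
  · nlinarith
  · have hquad : ∀ t : ℝ, 0 ≤ B x' x' * (t * t) + (2 * B x x') * t + B x x := by
      intro t
      set v : Fin N → ℝ := Pi.single x 1 + Pi.single x' t with hv
      have h := hB.dotProduct_mulVec_nonneg v
      have he : dotProduct (star v) (B.mulVec v)
          = B x' x' * (t * t) + (2 * B x x') * t + B x x := by
        simp [hv, Matrix.mulVec_add, dotProduct_add, add_dotProduct,
          Matrix.mulVec_single, single_dotProduct, hsym, Pi.single_apply,
          hne, hne.symm]
        ring
      rw [he] at h
      exact h
    have hd := discrim_le_zero (a := B x' x') (b := 2 * B x x') (c := B x x) hquad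
    rw [discrim] at hd
    nlinarith

/-- for PSD `B`, `g(B) ≥ (1/2)B` entrywise and `g(B)(x,x) = (1/2)B(x,x)`. -/
theorem reluCov_entrywise_ge_half {N : ℕ} (B : Matrix (Fin N) (Fin N) ℝ)
    (hB : B.PosSemidef) :
    (∀ x x', (1 / 2) * B x x' ≤ reluCov B x x') ∧
    (∀ x, reluCov B x x = (1 / 2) * B x x) := by
  have hdiag : ∀ x, 0 ≤ B x x := fun x => by
    have h := hB.dotProduct_mulVec_nonneg (Pi.single x 1)
    simpa [Matrix.mulVec_single, single_dotProduct] using h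
  constructor
  · intro x x'
    have hcs := psd_entry_sq_le B hB x x'
    obtain ⟨s, hs⟩ : ∃ s : ℝ, s = Real.sqrt (B x x) * Real.sqrt (B x' x') := ⟨_, rfl⟩
    have hs0 : 0 ≤ s := by rw [hs]; positivity
    have hs2 : s ^ 2 = B x x * B x' x' := by
      rw [hs, mul_pow, Real.sq_sqrt (hdiag x), Real.sq_sqrt (hdiag x')]
    have hrel : reluCov B x x' = 1 / 2 * s * arcCosCorr (B x x' / s) := by
      rw [hs]
      show (1 / 2) * Real.sqrt (B x x) * Real.sqrt (B x' x') * arcCosCorr _ = _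
      ring
    rcases eq_or_lt_of_le hs0 with hz | hpos
    · have hb0 : B x x' = 0 := by nlinarith
      rw [hrel, hb0, ← hz]
      simp
    · have hb2 : (B x x') ^ 2 ≤ s ^ 2 := by rw [hs2]; exact hcs
      have h1 : -s ≤ B x x' := by nlinarith
      have h2 : B x x' ≤ s := by nlinarith
      have hρ1 : -1 ≤ B x x' / s := by rw [le_div_iff₀ hpos]; linarith
      have hρ2 : B x x' / s ≤ 1 := by rw [div_le_one hpos]; exact h2
      have key := le_arcCosCorr hρ1 hρ2
      calc (1 / 2) * B x x' = 1 / 2 * s * (B x x' / s) := by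
            field_simp
        _ ≤ 1 / 2 * s * arcCosCorr (B x x' / s) :=
            mul_le_mul_of_nonneg_left key (by positivity)
        _ = reluCov B x x' := hrel.symm
  · intro x
    rcases eq_or_lt_of_le (hdiag x) with hz | hpos
    · simp [reluCov, ← hz]
    · have hsq : Real.sqrt (B x x) * Real.sqrt (B x x) = B x x :=
        Real.mul_self_sqrt (hdiag x)
      show (1 / 2) * Real.sqrt (B x x) * Real.sqrt (B x x)
          * arcCosCorr (B x x / (Real.sqrt (B x x) * Real.sqrt (B x x))) = (1 / 2) * B x x
      rw [hsq, div_self hpos.ne', arcCosCorr_one, mul_one, mul_assoc, hsq]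
end

section
/- Consider the recursion K^{(l+1)} = σ_b² 𝟙 + σ_w² A g(K^{(l)}) Aᵀ where g is the ReLU covariance mapping (trace(g(B)) = (1/2) trace(B) and trace(A g(B) Aᵀ) ≤ (1/2)‖A‖₂² trace(B)), A is symmetric with spectral radius λ > 0, and σ_w² < 2/λ². Then the sequence trace(K^{(l)}) is bounded: trace(K^{(l)}) ≤ N σ_b²/(1 − δ) + trace(K^{(0)}) for all l, where δ = σ_w² λ²/2 < 1. Consequently {K^{(l)}} is a bounded sequence of PSD matrices and admits a convergent subsequence. -/
/-- The spectral (operator 2-) norm of a real square matrix. -/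
noncomputable def specNorm {N : ℕ} (A : Matrix (Fin N) (Fin N) ℝ) : ℝ :=
  ‖(Matrix.toEuclideanCLM (𝕜 := ℝ) A :
      EuclideanSpace ℝ (Fin N) →L[ℝ] EuclideanSpace ℝ (Fin N))‖

/-- Entry bound for real PSD matrices: every entry is at most the trace in absolute value. -/
lemma psd_entry_le_trace {N : ℕ} (M : Matrix (Fin N) (Fin N) ℝ) (hM : M.PosSemidef)
    (i j : Fin N) : |M i j| ≤ M.trace := by
  have hdiag : ∀ k, 0 ≤ M k k := by
    intro k
    have := hM.dotProduct_mulVec_nonneg (Pi.single k 1)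
    simpa [dotProduct, Matrix.mulVec, Pi.single_apply] using this
  have htr : ∀ k, M k k ≤ M.trace := by
    intro k
    rw [Matrix.trace]
    exact Finset.single_le_sum (fun x _ => hdiag x) (Finset.mem_univ k)
  have htr0 : 0 ≤ M.trace := le_trans (hdiag i) (htr i)
  rcases eq_or_ne i j with rfl | hij
  · rw [abs_of_nonneg (hdiag i)]; exact htr i
  · have hsym : M j i = M i j := by
      have := hM.1; rw [Matrix.IsHermitian] at this
      calc M j i = M.conjTranspose i j := rfl
        _ = M i j := by rw [this]
    have quad : ∀ c : ℝ, 0 ≤ M i i + 2 * c * M i j + c^2 * M j j := by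
      intro c
      have := hM.dotProduct_mulVec_nonneg (fun k => (if k = i then 1 else 0) + c * (if k = j then 1 else 0))
      simp only [star_trivial] at this
      rw [dotProduct] at this
      simp only [Matrix.mulVec, dotProduct, mul_ite, mul_one, mul_zero,
        add_mul, mul_add, ite_mul, one_mul, zero_mul,
        Finset.sum_add_distrib, Finset.sum_ite_eq', Finset.mem_univ, if_true] at this
      rw [hsym] at this; ring_nf at this ⊢; linarith
    have h1 := quad 1
    have h2 := quad (-1)
    have hsum : M i i + M j j ≤ M.trace := by
      rw [Matrix.trace]
      have : M i i + M j j = ∑ k ∈ ({i, j} : Finset (Fin N)), M k k := by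
        rw [Finset.sum_pair hij]
      rw [this]
      exact Finset.sum_le_sum_of_subset_of_nonneg (Finset.subset_univ _)
        (fun k _ _ => hdiag k)
    rw [abs_le]
    constructor <;> nlinarith

/-- Trace of a real PSD matrix is nonnegative. -/
lemma psd_trace_nonneg {N : ℕ} (M : Matrix (Fin N) (Fin N) ℝ) (hM : M.PosSemidef) :
    0 ≤ M.trace := by
  rw [Matrix.trace]
  refine Finset.sum_nonneg fun k _ => ?_
  have := hM.dotProduct_mulVec_nonneg (Pi.single k 1)
  simpa [dotProduct, Matrix.mulVec, Pi.single_apply] using this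

/-- for the recursion `K^{(l+1)} = σ_b² 𝟙 + σ_w² A g(K^{(l)}) Aᵀ`, with
`A` symmetric with spectral radius `λ > 0`, the ReLU covariance mapping `g` (halving
the trace and satisfying the conjugation trace bound), and `σ_w² < 2/λ²`, the traces
are bounded by `N σ_b²/(1-δ) + trace K⁰` with `δ = σ_w² λ²/2 < 1`, and the (PSD)
sequence `K^{(l)}` admits a convergent subsequence. -/
theorem gcngp_depth_bounded_trace {N : ℕ} (A : Matrix (Fin N) (Fin N) ℝ)
    (hA : A.IsSymm) (lam σb2 σw2 : ℝ)
    (hlam : specNorm A = lam) (hlampos : 0 < lam)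
    (hσw0 : 0 ≤ σw2) (hσw : σw2 < 2 / lam ^ 2) (hσb : 0 ≤ σb2)
    (K G : ℕ → Matrix (Fin N) (Fin N) ℝ)
    (hK : ∀ l, (K l).PosSemidef)
    (hGtr : ∀ l, (G l).trace = (1 / 2) * (K l).trace)
    (hGA : ∀ l, (A * G l * A.transpose).trace ≤ (1 / 2) * specNorm A ^ 2 * (K l).trace)
    (hrec : ∀ l, K (l + 1) =
      σb2 • (Matrix.of fun _ _ => (1 : ℝ)) + σw2 • (A * G l * A.transpose)) :
    (∀ l, (K l).trace ≤ (N : ℝ) * σb2 / (1 - σw2 * lam ^ 2 / 2) + (K 0).trace) ∧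
    ∃ φ : ℕ → ℕ, StrictMono φ ∧
      ∃ Klim : Matrix (Fin N) (Fin N) ℝ,
        Filter.Tendsto (fun n => K (φ n)) Filter.atTop (nhds Klim) := by
  set δ := σw2 * lam ^ 2 / 2 with hδdef
  have hlam2 : 0 < lam ^ 2 := by positivity
  have hδ0 : 0 ≤ δ := by positivity
  have hδ1 : δ < 1 := by
    rw [lt_div_iff₀ hlam2] at hσw
    rw [hδdef]; linarith
  have h1δ : 0 < 1 - δ := by linarith
  set C := (N : ℝ) * σb2 / (1 - δ) + (K 0).trace with hCdef
  have hK0 : 0 ≤ (K 0).trace := psd_trace_nonneg _ (hK 0)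
  have hNσ : 0 ≤ (N : ℝ) * σb2 / (1 - δ) := by positivity
  have hC0 : 0 ≤ C := by rw [hCdef]; linarith
  -- one-step trace inequality
  have hstep : ∀ l, (K (l + 1)).trace ≤ (N : ℝ) * σb2 + δ * (K l).trace := by
    intro l
    rw [hrec l, Matrix.trace_add, Matrix.trace_smul, Matrix.trace_smul]
    have hones : (Matrix.of fun _ _ => (1 : ℝ) : Matrix (Fin N) (Fin N) ℝ).trace = N := by
      simp [Matrix.trace, Matrix.diag]
    rw [hones]
    have := hGA l
    rw [hlam] at this
    have h2 : σw2 * (A * G l * A.transpose).trace ≤ σw2 * ((1 / 2) * lam ^ 2 * (K l).trace) :=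
      mul_le_mul_of_nonneg_left this hσw0
    simp only [smul_eq_mul]
    have h3 : δ * (K l).trace = σw2 * ((1 / 2) * lam ^ 2 * (K l).trace) := by
      rw [hδdef]; ring
    linarith
  -- bounded traces
  have hbd : ∀ l, (K l).trace ≤ C := by
    intro l
    induction l with
    | zero => rw [hCdef]; linarith
    | succ n ih =>
      have h1 := hstep n
      have h2 : δ * (K n).trace ≤ δ * C := mul_le_mul_of_nonneg_left ih hδ0
      have hCeq : (N : ℝ) * σb2 + δ * C ≤ C := by
        have : (N : ℝ) * σb2 = (1 - δ) * ((N : ℝ) * σb2 / (1 - δ)) := by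
          field_simp
        rw [hCdef]; nlinarith [mul_nonneg hδ0 hK0]
      linarith
  refine ⟨hbd, ?_⟩
  -- Bolzano–Weierstrass in the (finite-dimensional) matrix space
  set f : ℕ → (Fin N → Fin N → ℝ) := fun l i j => K l i j with hf
  have hmem : ∀ l, f l ∈ Metric.closedBall (0 : Fin N → Fin N → ℝ) C := by
    intro l
    rw [Metric.mem_closedBall, dist_zero_right]
    refine (pi_norm_le_iff_of_nonneg hC0).2 fun i => ?_
    refine (pi_norm_le_iff_of_nonneg hC0).2 fun j => ?_
    rw [Real.norm_eq_abs]
    exact le_trans (psd_entry_le_trace _ (hK l) i j) (hbd l)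
  obtain ⟨a, -, φ, hφ, hconv⟩ :=
    tendsto_subseq_of_bounded Metric.isBounded_closedBall hmem
  refine ⟨φ, hφ, Matrix.of a, ?_⟩
  refine tendsto_pi_nhds.2 ?_
  intro i
  rw [tendsto_pi_nhds]
  intro j
  have := hconv
  rw [tendsto_pi_nhds] at this
  have := this i
  rw [tendsto_pi_nhds] at this
  exact this j
end

section
/- Let A be an irreducible nonnegative N×N matrix and let C⁰ be PSD with nonnegative entries. Define the recursion C^{(l)} = g(K^{(l)}) (ReLU covariance mapping, which sends an entrywise nonnegative PSD matrix to an entrywise nonnegative PSD matrix with g(B)(x,x') > 0 whenever B(x,x) > 0 and B(x',x') > 0) and K^{(l+1)} = σ_b² 𝟙 + σ_w² A C^{(l)} Aᵀ with σ_w > 0. If C^{(0)} has strictly positive diagonal, then K^{(2)} has all entries strictly positive. -/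
/-- A nonnegative matrix is irreducible: some positive power connects every pair. -/
def MatIrreducible {N : ℕ} (A : Matrix (Fin N) (Fin N) ℝ) : Prop :=
  ∀ i j, ∃ k : ℕ, 0 < k ∧ 0 < (A ^ k) i j

section Aux

variable {N : ℕ}

lemma pow_entry_nonneg (A : Matrix (Fin N) (Fin N) ℝ) (hA : ∀ i j, 0 ≤ A i j) :
    ∀ k i j, 0 ≤ (A ^ k) i j := by
  intro k
  induction k with
  | zero => intro i j; simp [Matrix.one_apply]; split <;> norm_num
  | succ n ih =>
    intro i j
    rw [pow_succ, Matrix.mul_apply]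
    exact Finset.sum_nonneg fun m _ => mul_nonneg (ih i m) (hA m j)

lemma row_pos (A : Matrix (Fin N) (Fin N) ℝ) (hA : ∀ i j, 0 ≤ A i j)
    (hAirr : MatIrreducible A) (i : Fin N) : ∃ m, 0 < A i m := by
  obtain ⟨k, hk, hpos⟩ := hAirr i i
  obtain ⟨k', rfl⟩ := Nat.exists_eq_succ_of_ne_zero hk.ne'
  rw [pow_succ', Matrix.mul_apply] at hpos
  by_contra h
  push_neg at h
  have : ∀ m ∈ Finset.univ, A i m * (A ^ k') m i ≤ 0 := fun m _ =>
    mul_nonpos_of_nonpos_of_nonneg (h m) (pow_entry_nonneg A hA k' m i)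
  exact absurd (Finset.sum_nonpos this) (not_le.mpr hpos)

lemma ones_posSemidef : (Matrix.of fun _ _ => (1 : ℝ) : Matrix (Fin N) (Fin N) ℝ).PosSemidef := by
  rw [Matrix.posSemidef_iff_dotProduct_mulVec]
  constructor
  · ext i j; simp [Matrix.conjTranspose_apply]
  · intro x
    have : dotProduct (star x) (Matrix.mulVec (Matrix.of fun _ _ => (1 : ℝ)) x)
        = (∑ j, x j) * (∑ j, x j) := by
      simp [dotProduct, Matrix.mulVec, Finset.sum_mul]
    rw [this]
    exact mul_self_nonneg _

lemma smul_posSemidef {M : Matrix (Fin N) (Fin N) ℝ} (hM : M.PosSemidef) {c : ℝ}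
    (hc : 0 ≤ c) : (c • M).PosSemidef := by
  rw [Matrix.posSemidef_iff_dotProduct_mulVec]
  constructor
  · unfold Matrix.IsHermitian
    rw [Matrix.conjTranspose_smul, hM.1, star_trivial]
  · intro x
    rw [Matrix.smul_mulVec, dotProduct_smul, smul_eq_mul]
    exact mul_nonneg hc (hM.dotProduct_mulVec_nonneg x)

end Aux

/-- for irreducible nonnegative `A`, `C⁰` PSD with nonnegative entries
and strictly positive diagonal, and the ReLU covariance mapping `g` (preserving
entrywise-nonnegative PSD matrices, with `g(B)(x,x') > 0` whenever
`B(x,x), B(x',x') > 0`), the second iterate `K² = σ_b² 𝟙 + σ_w² A g(K¹) Aᵀ` of the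
GCN covariance recursion has all entries strictly positive. -/
theorem gcngp_K2_entrywise_pos {N : ℕ} (A C0 : Matrix (Fin N) (Fin N) ℝ)
    (hAnn : ∀ i j, 0 ≤ A i j) (hAirr : MatIrreducible A)
    (hC0 : C0.PosSemidef) (hC0nn : ∀ i j, 0 ≤ C0 i j) (hC0d : ∀ i, 0 < C0 i i)
    (σb2 σw2 : ℝ) (hσb : 0 ≤ σb2) (hσw : 0 < σw2)
    (g : Matrix (Fin N) (Fin N) ℝ → Matrix (Fin N) (Fin N) ℝ)
    (hg : ∀ B : Matrix (Fin N) (Fin N) ℝ, B.PosSemidef → (∀ i j, 0 ≤ B i j) →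
      (g B).PosSemidef ∧ (∀ i j, 0 ≤ g B i j) ∧
      ∀ i j, 0 < B i i → 0 < B j j → 0 < g B i j)
    (K1 K2 : Matrix (Fin N) (Fin N) ℝ)
    (hK1 : K1 = σb2 • (Matrix.of fun _ _ => (1 : ℝ)) + σw2 • (A * C0 * A.transpose))
    (hK2 : K2 = σb2 • (Matrix.of fun _ _ => (1 : ℝ)) + σw2 • (A * g K1 * A.transpose)) :
    ∀ i j, 0 < K2 i j := by
  -- entrywise nonnegativity of A C0 Aᵀ
  have hACA_nn : ∀ i j, 0 ≤ (A * C0 * A.transpose) i j := by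
    intro i j
    rw [Matrix.mul_apply]
    refine Finset.sum_nonneg fun m _ => ?_
    rw [Matrix.mul_apply]
    refine mul_nonneg (Finset.sum_nonneg fun p _ => mul_nonneg (hAnn i p) (hC0nn p m)) ?_
    exact hAnn j m
  -- K1 is entrywise nonnegative
  have hK1nn : ∀ i j, 0 ≤ K1 i j := by
    intro i j
    rw [hK1]
    simp only [Matrix.add_apply, Matrix.smul_apply, Matrix.of_apply, smul_eq_mul, mul_one]
    exact add_nonneg hσb (mul_nonneg hσw.le (hACA_nn i j))
  -- K1 is PSD
  have hK1psd : K1.PosSemidef := by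
    rw [hK1]
    refine (smul_posSemidef ones_posSemidef hσb).add (smul_posSemidef ?_ hσw.le)
    have := hC0.mul_mul_conjTranspose_same A
    simpa [Matrix.conjTranspose_eq_transpose_of_trivial] using this
  -- K1 has positive diagonal
  have hK1d : ∀ i, 0 < K1 i i := by
    intro i
    obtain ⟨m, hm⟩ := row_pos A hAnn hAirr i
    have hterm : 0 < A i m * C0 m m * A i m :=
      mul_pos (mul_pos hm (hC0d m)) hm
    have hACA : 0 < (A * C0 * A.transpose) i i := by
      rw [Matrix.mul_apply]
      refine Finset.sum_pos' (fun q _ => ?_) ⟨m, Finset.mem_univ m, ?_⟩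
      · rw [Matrix.mul_apply]
        exact mul_nonneg
          (Finset.sum_nonneg fun p _ => mul_nonneg (hAnn i p) (hC0nn p q)) (hAnn i q)
      · rw [Matrix.mul_apply]
        refine lt_of_lt_of_le hterm ?_
        rw [Matrix.transpose_apply]
        refine mul_le_mul_of_nonneg_right ?_ (hAnn i m)
        exact Finset.single_le_sum
          (fun p _ => mul_nonneg (hAnn i p) (hC0nn p m)) (Finset.mem_univ m)
    rw [hK1]
    simp only [Matrix.add_apply, Matrix.smul_apply, Matrix.of_apply, smul_eq_mul, mul_one]
    exact add_pos_of_nonneg_of_pos hσb (mul_pos hσw hACA)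
  obtain ⟨hgpsd, hgnn, hgpos⟩ := hg K1 hK1psd hK1nn
  have hgK1 : ∀ i j, 0 < g K1 i j := fun i j => hgpos i j (hK1d i) (hK1d j)
  intro i j
  obtain ⟨m, hm⟩ := row_pos A hAnn hAirr i
  obtain ⟨n, hn⟩ := row_pos A hAnn hAirr j
  have hAgA : 0 < (A * g K1 * A.transpose) i j := by
    rw [Matrix.mul_apply]
    refine Finset.sum_pos' (fun q _ => ?_) ⟨n, Finset.mem_univ n, ?_⟩
    · rw [Matrix.mul_apply]
      exact mul_nonneg
        (Finset.sum_nonneg fun p _ => mul_nonneg (hAnn i p) (hgnn p q)) (hAnn j q)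
    · rw [Matrix.mul_apply, Matrix.transpose_apply]
      refine mul_pos ?_ hn
      refine Finset.sum_pos' (fun p _ => mul_nonneg (hAnn i p) (hgnn p n))
        ⟨m, Finset.mem_univ m, mul_pos hm (hgK1 m n)⟩
  rw [hK2]
  simp only [Matrix.add_apply, Matrix.smul_apply, Matrix.of_apply, smul_eq_mul, mul_one]
  exact add_pos_of_nonneg_of_pos hσb (mul_pos hσw hAgA)
end
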